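/- In the affiliation network model with parameter θ* and 1 ≤ m ≤ n, let V = V(θ*) be the Fisher information matrix (which equals the covariance matrix of g), let S be the approximating matrix built from V, let R = V^{−1} − S, and let U = Cov[R(g − E g)] = R V Rᵀ. Then ‖U‖ ≤ ‖V^{−1} − S‖ + 3(1 + e^{2‖θ*‖_∞})⁴ / (4 m n e^{4‖θ*‖_∞}), where ‖A‖ := max_{i,j} |a_{ij}|. -/

import Mathlib

open MeasureTheory ProbabilityTheory Filter Matrix Topology
open scoped ENNReal NNReal

noncomputable section

namespace Affiliation

/-- Index type for the parameter vector `θ ∈ ℝ^{m+n-1}`: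
`Sum.inl i` corresponds to the coordinate `α_i` (`1 ≤ i ≤ m`),
`Sum.inr j` to the coordinate `β_j` (`1 ≤ j ≤ n-1`). -/
abbrev Idx (m n : ℕ) := Fin m ⊕ Fin (n - 1)

/-- The logistic function `e^x / (1 + e^x)`. -/
def pf (x : ℝ) : ℝ := Real.exp x / (1 + Real.exp x)

/-- `e^x / (1 + e^x)^2`, the derivative of the logistic function. -/
def pf' (x : ℝ) : ℝ := Real.exp x / (1 + Real.exp x) ^ 2

variable {m n : ℕ} {Ω : Type*}

/-- `α_i` read off from `θ`. -/
def alphaF (θ : Idx m n → ℝ) (i : Fin m) : ℝ := θ (Sum.inl i)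

/-- `β_j` read off from `θ`, with the convention `β_n = 0`. -/
def betaF (θ : Idx m n → ℝ) (j : Fin n) : ℝ :=
  if h : (j : ℕ) < n - 1 then θ (Sum.inr ⟨j, h⟩) else 0

/-- The degree `d_i = Σ_j x_{ij}` of event `i`. -/
def degVec (X : Fin m → Fin n → Ω → ℝ) (ω : Ω) (i : Fin m) : ℝ := ∑ j, X i j ω

/-- The degree `b_j = Σ_i x_{ij}` of actor `j`. -/
def bVec (X : Fin m → Fin n → Ω → ℝ) (ω : Ω) (j : Fin n) : ℝ := ∑ i, X i j ω

/-- The vector `g = (d_1, …, d_m, b_1, …, b_{n-1})`. -/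
def gvec (X : Fin m → Fin n → Ω → ℝ) (ω : Ω) : Idx m n → ℝ :=
  Sum.elim (degVec X ω) (fun j => bVec X ω (Fin.castLE (Nat.sub_le n 1) j))

/-- The affiliation network model: the `x_{ij}` are mutually independent `{0,1}`-valued
random variables with `P(x_{ij} = 1) = e^{α_i+β_j}/(1+e^{α_i+β_j})` (convention `β_n = 0`). -/
structure IsAffilModel [MeasurableSpace Ω] (P : Measure Ω)
    (θ : Idx m n → ℝ) (X : Fin m → Fin n → Ω → ℝ) : Prop where
  isProb : IsProbabilityMeasure P
  meas : ∀ i j, Measurable (X i j)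
  binary : ∀ i j ω, X i j ω = 0 ∨ X i j ω = 1
  indep : iIndepFun (fun p : Fin m × Fin n => X p.1 p.2) P
  prob_one : ∀ i j, P {ω | X i j ω = 1} = ENNReal.ofReal (pf (alphaF θ i + betaF θ j))

/-- The expectation `E g`. -/
def Eg [MeasurableSpace Ω] (P : Measure Ω) (X : Fin m → Fin n → Ω → ℝ) (k : Idx m n) : ℝ :=
  ∫ ω, gvec X ω k ∂P

/-- The likelihood equations: `θ` is an MLE for the observed degrees `(d, b)`. -/
def IsMLE (d : Fin m → ℝ) (b : Fin (n - 1) → ℝ) (θ : Idx m n → ℝ) : Prop :=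
  (∀ i, d i = ∑ j : Fin n, pf (alphaF θ i + betaF θ j)) ∧
  (∀ j : Fin (n - 1), b j = ∑ i : Fin m, pf (alphaF θ i + θ (Sum.inr j)))

/-- `θ` is an MLE for the degrees observed at the sample point `ω`. -/
def IsMLEat (X : Fin m → Fin n → Ω → ℝ) (ω : Ω) (θ : Idx m n → ℝ) : Prop :=
  IsMLE (degVec X ω) (fun j => bVec X ω (Fin.castLE (Nat.sub_le n 1) j)) θ

/-- The Fisher information matrix `V(θ)`. -/
def fisher (θ : Idx m n → ℝ) : Matrix (Idx m n) (Idx m n) ℝ :=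
  fun k l => match k, l with
  | Sum.inl i, Sum.inl i' => if i = i' then ∑ j : Fin n, pf' (alphaF θ i + betaF θ j) else 0
  | Sum.inl i, Sum.inr j => pf' (alphaF θ i + θ (Sum.inr j))
  | Sum.inr j, Sum.inl i => pf' (alphaF θ i + θ (Sum.inr j))
  | Sum.inr j, Sum.inr j' => if j = j' then ∑ i : Fin m, pf' (alphaF θ i + θ (Sum.inr j)) else 0

/-- `v_{i,m+n} := v_{ii} - Σ_{j ≠ i} v_{ij}`. -/
def vRem (V : Matrix (Idx m n) (Idx m n) ℝ) (i : Idx m n) : ℝ :=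
  V i i - ∑ j ∈ Finset.univ.erase i, V i j

/-- `v_{m+n,m+n} := Σ_{i=1}^{m+n-1} v_{i,m+n}`. -/
def vnnOf (V : Matrix (Idx m n) (Idx m n) ℝ) : ℝ := ∑ i, vRem V i

/-- `v_{m+n,m+n}` for the Fisher information matrix,
`Σ_{i=1}^m (v_{ii} - Σ_{j=m+1}^{m+n-1} v_{ij})`. -/
def vnnFisher (θ : Idx m n → ℝ) : ℝ :=
  ∑ i : Fin m,
    (fisher θ (Sum.inl i) (Sum.inl i) - ∑ j : Fin (n - 1), fisher θ (Sum.inl i) (Sum.inr j))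

/-- The approximating matrix `S` built from `V`, with `1/v_{m+n,m+n}` replaced by `1/c`. -/
def approxSWith (V : Matrix (Idx m n) (Idx m n) ℝ) (c : ℝ) : Matrix (Idx m n) (Idx m n) ℝ :=
  fun k l => match k, l with
  | Sum.inl i, Sum.inl i' => (if i = i' then (V (Sum.inl i) (Sum.inl i))⁻¹ else 0) + c⁻¹
  | Sum.inr j, Sum.inr j' => (if j = j' then (V (Sum.inr j) (Sum.inr j))⁻¹ else 0) + c⁻¹
  | _, _ => -c⁻¹

/-- The approximating matrix `S` built from a matrix `V` in the class `L_{m,n}(q,Q)`. -/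
def approxS (V : Matrix (Idx m n) (Idx m n) ℝ) : Matrix (Idx m n) (Idx m n) ℝ :=
  approxSWith V (vnnOf V)

/-- The approximating matrix `S` built from the Fisher information matrix `V(θ)`. -/
def fisherS (θ : Idx m n → ℝ) : Matrix (Idx m n) (Idx m n) ℝ :=
  approxSWith (fisher θ) (vnnFisher θ)

/-- Membership in the matrix class `L_{m,n}(q,Q)`. -/
structure MemL (m n : ℕ) (q Q : ℝ) (V : Matrix (Idx m n) (Idx m n) ℝ) : Prop where
  symm : V.IsSymm
  nonneg : ∀ i j, 0 ≤ V i j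
  zero_ll : ∀ a b : Fin m, a ≠ b → V (Sum.inl a) (Sum.inl b) = 0
  zero_rr : ∀ a b : Fin (n - 1), a ≠ b → V (Sum.inr a) (Sum.inr b) = 0
  cross_lb : ∀ (a : Fin m) (b : Fin (n - 1)), q ≤ V (Sum.inl a) (Sum.inr b)
  cross_ub : ∀ (a : Fin m) (b : Fin (n - 1)), V (Sum.inl a) (Sum.inr b) ≤ Q
  diag_l_lb : ∀ a : Fin m,
    q ≤ V (Sum.inl a) (Sum.inl a) - ∑ b : Fin (n - 1), V (Sum.inl a) (Sum.inr b)
  diag_l_ub : ∀ a : Fin m,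
    V (Sum.inl a) (Sum.inl a) - ∑ b : Fin (n - 1), V (Sum.inl a) (Sum.inr b) ≤ Q
  diag_r : ∀ b : Fin (n - 1), V (Sum.inr b) (Sum.inr b) = ∑ a : Fin m, V (Sum.inl a) (Sum.inr b)

/-- `‖A‖ := max_{i,j} |a_{ij}|`. -/
def matNorm (A : Matrix (Idx m n) (Idx m n) ℝ) : ℝ :=
  ‖fun p : Idx m n × Idx m n => A p.1 p.2‖

/-- The index (0-based) `i` of `θ ∈ ℝ^{m+n-1}` as an element of `Idx m n`, if it exists. -/
def coordIdx (m n i : ℕ) : Option (Idx m n) :=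
  if h : i < m then some (Sum.inl ⟨i, h⟩)
  else if h' : i - m < n - 1 then some (Sum.inr ⟨i - m, h'⟩)
  else none

/-- The `i`-th coordinate (0-based) of a vector `x ∈ ℝ^{m+n-1}` (junk value `0` out of range). -/
def coordVal (x : Idx m n → ℝ) (i : ℕ) : ℝ := ((coordIdx m n i).map x).getD 0

/-- The upper-left `k × k` block of a matrix indexed by `Idx m n`. -/
def blockK (A : Matrix (Idx m n) (Idx m n) ℝ) (k : ℕ) : Matrix (Fin k) (Fin k) ℝ :=
  fun i j => match coordIdx m n (i : ℕ), coordIdx m n (j : ℕ) with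
    | some a, some b => A a b
    | _, _ => 0

/-- The inverse square root `A^{-1/2}` of a positive semidefinite matrix
(junk value `0` if `A` is not positive semidefinite). -/
def invSqrt {k : ℕ} (A : Matrix (Fin k) (Fin k) ℝ) : Matrix (Fin k) (Fin k) ℝ :=
  letI := Classical.propDecidable A.PosSemidef
  if h : A.PosSemidef then ((h.1.eigenvectorUnitary : Matrix (Fin k) (Fin k) ℝ) *
    diagonal (Real.sqrt ∘ h.1.eigenvalues) *
    (star h.1.eigenvectorUnitary : Matrix (Fin k) (Fin k) ℝ))⁻¹ else 0

/-- The standard Gaussian distribution `N(0, I_k)` on `ℝ^k`. -/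
def stdGaussian (k : ℕ) : Measure (Fin k → ℝ) :=
  Measure.pi fun _ => gaussianReal 0 1

/-- The function `F(θ)` whose components are
`F_i(θ) = d_i - Σ_k f(α_i + β_k)` and `F_{m+j}(θ) = b_j - Σ_k f(α_k + β_j)`. -/
def Fvec (f : ℝ → ℝ) (d : Fin m → ℝ) (b : Fin (n - 1) → ℝ) (θ : Idx m n → ℝ) : Idx m n → ℝ :=
  fun k => match k with
  | Sum.inl i => d i - ∑ j : Fin n, f (alphaF θ i + betaF θ j)
  | Sum.inr j => b j - ∑ i : Fin m, f (alphaF θ i + θ (Sum.inr j))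

/-- The Jacobian matrix `F'(θ)` of `Fvec f d b`. -/
def jacF (f : ℝ → ℝ) (θ : Idx m n → ℝ) : Matrix (Idx m n) (Idx m n) ℝ :=
  fun k l => match k, l with
  | Sum.inl i, Sum.inl i' =>
      if i = i' then -∑ j : Fin n, deriv f (alphaF θ i + betaF θ j) else 0
  | Sum.inl i, Sum.inr j => -deriv f (alphaF θ i + θ (Sum.inr j))
  | Sum.inr j, Sum.inl i => -deriv f (alphaF θ i + θ (Sum.inr j))
  | Sum.inr j, Sum.inr j' =>
      if j = j' then -∑ i : Fin m, deriv f (alphaF θ i + θ (Sum.inr j)) else 0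

/-- The Newton iterates `θ^{(k+1)} = θ^{(k)} - [F'(θ^{(k)})]⁻¹ F(θ^{(k)})`. -/
def newton (f : ℝ → ℝ) (d : Fin m → ℝ) (b : Fin (n - 1) → ℝ) (θ0 : Idx m n → ℝ) :
    ℕ → Idx m n → ℝ
  | 0 => θ0
  | k + 1 =>
    newton f d b θ0 k - (jacF f (newton f d b θ0 k))⁻¹.mulVec (Fvec f d b (newton f d b θ0 k))

section AuxCov

-- auxiliary quantities
def cc (θ : Idx m n → ℝ) (i : Fin m) (j : Fin (n-1)) : ℝ := pf' (alphaF θ i + θ (Sum.inr j))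
def rr (θ : Idx m n → ℝ) (i : Fin m) : ℝ := pf' (alphaF θ i)
def vv (θ : Idx m n → ℝ) (i : Fin m) : ℝ := ∑ j : Fin n, pf' (alphaF θ i + betaF θ j)
def ww (θ : Idx m n → ℝ) (j : Fin (n-1)) : ℝ := ∑ i : Fin m, cc θ i j

variable (θ : Idx m n → ℝ)

lemma fisher_ll (i i' : Fin m) : fisher θ (Sum.inl i) (Sum.inl i') = if i = i' then vv θ i else 0 := rfl
lemma fisher_lr (i : Fin m) (j : Fin (n-1)) : fisher θ (Sum.inl i) (Sum.inr j) = cc θ i j := rfl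
lemma fisher_rl (i : Fin m) (j : Fin (n-1)) : fisher θ (Sum.inr j) (Sum.inl i) = cc θ i j := rfl
lemma fisher_rr (j j' : Fin (n-1)) : fisher θ (Sum.inr j) (Sum.inr j') = if j = j' then ww θ j else 0 := rfl

lemma fisherS_ll (i i' : Fin m) : fisherS θ (Sum.inl i) (Sum.inl i')
    = (if i = i' then (vv θ i)⁻¹ else 0) + (vnnFisher θ)⁻¹ := by
  simp [fisherS, approxSWith, fisher_ll]
lemma fisherS_lr (i : Fin m) (j : Fin (n-1)) : fisherS θ (Sum.inl i) (Sum.inr j) = -(vnnFisher θ)⁻¹ := rfl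
lemma fisherS_rl (i : Fin m) (j : Fin (n-1)) : fisherS θ (Sum.inr j) (Sum.inl i) = -(vnnFisher θ)⁻¹ := rfl
lemma fisherS_rr (j j' : Fin (n-1)) : fisherS θ (Sum.inr j) (Sum.inr j')
    = (if j = j' then (ww θ j)⁻¹ else 0) + (vnnFisher θ)⁻¹ := by
  simp [fisherS, approxSWith, fisher_rr]


lemma vv_split (hn : 1 ≤ n) (i : Fin m) :
    vv θ i = (∑ j : Fin (n-1), cc θ i j) + rr θ i := by
  classical
  set f : ℕ → ℝ := fun k => pf' (alphaF θ i + if h : k < n - 1 then θ (Sum.inr ⟨k, h⟩) else 0) with hf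
  have h1 : vv θ i = ∑ k ∈ Finset.range n, f k := by
    rw [vv, ← Fin.sum_univ_eq_sum_range f n]
    exact Finset.sum_congr rfl fun j _ => by simp only [hf, betaF]
  have h2 : Finset.range n = Finset.range ((n-1) + 1) := by congr 1; omega
  rw [h1, h2, Finset.sum_range_succ]
  have h3 : f (n-1) = rr θ i := by
    simp only [hf, dif_neg (lt_irrefl (n-1))]
    simp [rr]
  rw [h3]
  congr 1
  have h4 : (∑ j : Fin (n-1), cc θ i j)
      = ∑ k ∈ Finset.range (n-1), (fun k => if h : k < n-1 then cc θ i ⟨k,h⟩ else 0) k := by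
    rw [← Fin.sum_univ_eq_sum_range]
    exact Finset.sum_congr rfl fun j _ => by simp [j.isLt]
  rw [h4]
  refine Finset.sum_congr rfl fun k hk => ?_
  have hk' : k < n - 1 := Finset.mem_range.1 hk
  simp only [hf, dif_pos hk']
  rfl

lemma cc_sum (hn : 1 ≤ n) (i : Fin m) : ∑ j : Fin (n-1), cc θ i j = vv θ i - rr θ i := by
  rw [vv_split θ hn i]; ring

lemma vnn_eq (hn : 1 ≤ n) : vnnFisher θ = ∑ i, rr θ i := by
  unfold vnnFisher
  refine Finset.sum_congr rfl fun i _ => ?_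
  have h1 : fisher θ (Sum.inl i) (Sum.inl i) = vv θ i := by simp [fisher_ll]
  have h2 : ∀ j : Fin (n-1), fisher θ (Sum.inl i) (Sum.inr j) = cc θ i j := fun j => rfl
  simp only [h1, h2]
  rw [cc_sum θ hn i]; ring

lemma SV_ll (hn : 1 ≤ n) (i i' : Fin m) (hv : vv θ i ≠ 0) :
    (fisherS θ * fisher θ) (Sum.inl i) (Sum.inl i')
    = (if i = i' then 1 else 0) + rr θ i' * (vnnFisher θ)⁻¹ := by
  classical
  rw [Matrix.mul_apply, Fintype.sum_sum_type]
  simp only [fisherS_ll, fisher_ll, fisherS_lr, fisher_rl]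
  simp only [neg_mul, Finset.sum_neg_distrib, ← Finset.mul_sum, cc_sum θ hn,
    add_mul, ite_mul, zero_mul, mul_ite, mul_zero, Finset.sum_add_distrib,
    Finset.sum_ite_eq, Finset.sum_ite_eq', Finset.mem_univ, if_true]
  have h5 : (if i = i' then (vv θ i)⁻¹ * vv θ i' else 0) = (if i = i' then 1 else 0) := by
    split_ifs with h
    · rw [← h]; exact inv_mul_cancel₀ hv
    · rfl
  rw [h5]; ring


lemma ww_sum (j : Fin (n-1)) : ∑ p : Fin m, cc θ p j = ww θ j := rfl

lemma SV_lr (i : Fin m) (j : Fin (n-1)) :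
    (fisherS θ * fisher θ) (Sum.inl i) (Sum.inr j) = cc θ i j * (vv θ i)⁻¹ := by
  classical
  rw [Matrix.mul_apply, Fintype.sum_sum_type]
  simp only [fisherS_ll, fisher_lr, fisherS_lr, fisher_rr]
  simp only [neg_mul, Finset.sum_neg_distrib, add_mul, ite_mul, zero_mul, mul_ite, mul_zero,
    Finset.sum_add_distrib, Finset.sum_ite_eq, Finset.sum_ite_eq', Finset.mem_univ, if_true,
    ← Finset.mul_sum, ww_sum]
  ring

lemma SV_rl (hn : 1 ≤ n) (i' : Fin m) (j : Fin (n-1)) :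
    (fisherS θ * fisher θ) (Sum.inr j) (Sum.inl i')
    = cc θ i' j * (ww θ j)⁻¹ - rr θ i' * (vnnFisher θ)⁻¹ := by
  classical
  rw [Matrix.mul_apply, Fintype.sum_sum_type]
  simp only [fisherS_rl, fisher_ll, fisherS_rr, fisher_rl]
  simp only [neg_mul, Finset.sum_neg_distrib, add_mul, ite_mul, zero_mul, mul_ite, mul_zero,
    Finset.sum_add_distrib, Finset.sum_ite_eq, Finset.sum_ite_eq', Finset.mem_univ, if_true,
    ← Finset.mul_sum, cc_sum θ hn]
  ring

lemma SV_rr (j j' : Fin (n-1)) (hw : ww θ j ≠ 0) :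
    (fisherS θ * fisher θ) (Sum.inr j) (Sum.inr j') = (if j = j' then 1 else 0) := by
  classical
  rw [Matrix.mul_apply, Fintype.sum_sum_type]
  simp only [fisherS_rl, fisher_lr, fisherS_rr, fisher_rr]
  simp only [neg_mul, Finset.sum_neg_distrib, add_mul, ite_mul, zero_mul, mul_ite, mul_zero,
    Finset.sum_add_distrib, Finset.sum_ite_eq, Finset.sum_ite_eq', Finset.mem_univ, if_true,
    ← Finset.mul_sum, ww_sum]
  have h5 : (if j = j' then (ww θ j)⁻¹ * ww θ j' else 0) = (if j = j' then 1 else 0) := by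
    split_ifs with h
    · rw [← h]; exact inv_mul_cancel₀ hw
    · rfl
  rw [h5]; ring


lemma TS_ll (hn : 1 ≤ n) (hc : vnnFisher θ ≠ 0) (i i' : Fin m) (hvi : vv θ i ≠ 0) (hvi' : vv θ i' ≠ 0) :
    (fisherS θ * fisher θ * fisherS θ) (Sum.inl i) (Sum.inl i')
    = fisherS θ (Sum.inl i) (Sum.inl i')
      + rr θ i * ((vnnFisher θ)⁻¹ * (vv θ i)⁻¹)
      + rr θ i' * ((vnnFisher θ)⁻¹ * (vv θ i')⁻¹) := by
  classical
  have hT1 : ∀ p, (fisherS θ * fisher θ) (Sum.inl i) (Sum.inl p)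
      = (if i = p then 1 else 0) + rr θ p * (vnnFisher θ)⁻¹ := fun p => SV_ll θ hn i p hvi
  rw [Matrix.mul_apply, Fintype.sum_sum_type]
  simp only [hT1, SV_lr, fisherS_ll, fisherS_rl]
  simp only [neg_mul, mul_neg, Finset.sum_neg_distrib, add_mul, mul_add, ite_mul, mul_ite,
    one_mul, mul_one, zero_mul, mul_zero, Finset.sum_add_distrib,
    Finset.sum_ite_eq, Finset.sum_ite_eq', Finset.mem_univ, if_true,
    ← Finset.sum_mul, ← Finset.mul_sum, cc_sum θ hn]
  rw [← vnn_eq θ hn]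
  split_ifs with h
  · rw [h]; field_simp; ring
  · field_simp; ring

lemma TS_lr (hn : 1 ≤ n) (hc : vnnFisher θ ≠ 0) (i : Fin m) (j : Fin (n-1)) (hvi : vv θ i ≠ 0) (hwj : ww θ j ≠ 0) :
    (fisherS θ * fisher θ * fisherS θ) (Sum.inl i) (Sum.inr j)
    = fisherS θ (Sum.inl i) (Sum.inr j)
      + cc θ i j * ((vv θ i)⁻¹ * (ww θ j)⁻¹)
      - rr θ i * ((vnnFisher θ)⁻¹ * (vv θ i)⁻¹) := by
  classical
  have hT1 : ∀ p, (fisherS θ * fisher θ) (Sum.inl i) (Sum.inl p)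
      = (if i = p then 1 else 0) + rr θ p * (vnnFisher θ)⁻¹ := fun p => SV_ll θ hn i p hvi
  rw [Matrix.mul_apply, Fintype.sum_sum_type]
  simp only [hT1, SV_lr, fisherS_lr, fisherS_rr]
  simp only [neg_mul, mul_neg, Finset.sum_neg_distrib, add_mul, mul_add, ite_mul, mul_ite,
    one_mul, mul_one, zero_mul, mul_zero, Finset.sum_add_distrib,
    Finset.sum_ite_eq, Finset.sum_ite_eq', Finset.mem_univ, if_true,
    ← Finset.sum_mul, ← Finset.mul_sum, cc_sum θ hn]
  rw [← vnn_eq θ hn]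
  field_simp
  ring

lemma TS_rl (hn : 1 ≤ n) (i' : Fin m) (j : Fin (n-1)) (hvi' : vv θ i' ≠ 0) (hwj : ww θ j ≠ 0) :
    (fisherS θ * fisher θ * fisherS θ) (Sum.inr j) (Sum.inl i')
    = fisherS θ (Sum.inr j) (Sum.inl i')
      + cc θ i' j * ((vv θ i')⁻¹ * (ww θ j)⁻¹)
      - rr θ i' * ((vnnFisher θ)⁻¹ * (vv θ i')⁻¹) := by
  classical
  have hT2 : ∀ p, (fisherS θ * fisher θ) (Sum.inr j) (Sum.inr p)
      = (if j = p then 1 else 0) := fun p => SV_rr θ j p hwj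
  rw [Matrix.mul_apply, Fintype.sum_sum_type]
  simp only [SV_rl θ hn, hT2, fisherS_ll, fisherS_rl]
  simp only [neg_mul, mul_neg, Finset.sum_neg_distrib, add_mul, sub_mul, mul_add, ite_mul, mul_ite,
    one_mul, mul_one, zero_mul, mul_zero, Finset.sum_add_distrib, Finset.sum_sub_distrib,
    Finset.sum_ite_eq, Finset.sum_ite_eq', Finset.mem_univ, if_true,
    ← Finset.sum_mul, ← Finset.mul_sum, ww_sum]
  rw [← vnn_eq θ hn]
  field_simp
  ring

lemma TS_rr (hn : 1 ≤ n) (j j' : Fin (n-1)) (hwj : ww θ j ≠ 0) :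
    (fisherS θ * fisher θ * fisherS θ) (Sum.inr j) (Sum.inr j')
    = fisherS θ (Sum.inr j) (Sum.inr j') := by
  classical
  have hT2 : ∀ p, (fisherS θ * fisher θ) (Sum.inr j) (Sum.inr p)
      = (if j = p then 1 else 0) := fun p => SV_rr θ j p hwj
  rw [Matrix.mul_apply, Fintype.sum_sum_type]
  simp only [SV_rl θ hn, hT2, fisherS_lr, fisherS_rr]
  simp only [neg_mul, mul_neg, Finset.sum_neg_distrib, add_mul, sub_mul, mul_add, ite_mul, mul_ite,
    one_mul, mul_one, zero_mul, mul_zero, Finset.sum_add_distrib, Finset.sum_sub_distrib,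
    Finset.sum_ite_eq, Finset.sum_ite_eq', Finset.mem_univ, if_true,
    ← Finset.sum_mul, ← Finset.mul_sum, ww_sum]
  rw [← vnn_eq θ hn]
  field_simp
  split_ifs with h
  · rw [h]; ring
  · ring


lemma pf'_pos (x : ℝ) : 0 < pf' x := by unfold pf'; positivity

lemma pf'_le_quarter (x : ℝ) : pf' x ≤ 1/4 := by
  unfold pf'
  rw [div_le_div_iff₀ (by positivity) (by norm_num)]
  nlinarith [Real.exp_pos x, sq_nonneg (1 - Real.exp x)]

lemma le_pf' {M x : ℝ} (hx : |x| ≤ 2*M) :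
    Real.exp (2*M) / (1 + Real.exp (2*M))^2 ≤ pf' x := by
  obtain ⟨h1, h2⟩ := abs_le.1 hx
  have ht : Real.exp x ≤ Real.exp (2*M) := Real.exp_le_exp.2 h2
  have ht2 : Real.exp (-(2*M)) ≤ Real.exp x := Real.exp_le_exp.2 (by linarith)
  have hmul : Real.exp (2*M) * Real.exp (-(2*M)) = 1 := by rw [← Real.exp_add]; simp
  have hAt : 1 ≤ Real.exp (2*M) * Real.exp x := by
    calc 1 = Real.exp (2*M) * Real.exp (-(2*M)) := hmul.symm
    _ ≤ _ := by nlinarith [Real.exp_pos (2*M)]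
  unfold pf'
  rw [div_le_div_iff₀ (by positivity) (by positivity)]
  nlinarith [mul_nonneg (sub_nonneg.2 ht) (sub_nonneg.2 hAt), Real.exp_pos x, Real.exp_pos (2*M)]

lemma fisher_symm : (fisher θ)ᵀ = fisher θ := by
  ext k l
  rw [Matrix.transpose_apply]
  cases k with
  | inl i => cases l with
    | inl i' =>
      rw [fisher_ll, fisher_ll]
      by_cases h : i = i'
      · subst h; rfl
      · rw [if_neg h, if_neg (fun h' => h h'.symm)]
    | inr j => rfl
  | inr j => cases l with
    | inl i' => rfl
    | inr j' =>
      rw [fisher_rr, fisher_rr]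
      by_cases h : j = j'
      · subst h; rfl
      · rw [if_neg h, if_neg (fun h' => h h'.symm)]

lemma fisherS_symm : (fisherS θ)ᵀ = fisherS θ := by
  ext k l
  rw [Matrix.transpose_apply]
  cases k with
  | inl i => cases l with
    | inl i' =>
      rw [fisherS_ll, fisherS_ll]
      by_cases h : i = i'
      · subst h; rfl
      · rw [if_neg h, if_neg (fun h' => h h'.symm)]
    | inr j => rfl
  | inr j => cases l with
    | inl i' => rfl
    | inr j' =>
      rw [fisherS_rr, fisherS_rr]
      by_cases h : j = j'
      · subst h; rfl
      · rw [if_neg h, if_neg (fun h' => h h'.symm)]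


lemma mul3_le {a b c a' b' c' : ℝ} (ha : 0 ≤ a) (hb : 0 ≤ b) (hc : 0 ≤ c)
    (h1 : a ≤ a') (h2 : b ≤ b') (h3 : c ≤ c') : a*(b*c) ≤ a'*(b'*c') := by
  have hb' : 0 ≤ b' := le_trans hb h2
  exact mul_le_mul h1 (mul_le_mul h2 h3 hc hb') (mul_nonneg hb hc) (le_trans ha h1)

end AuxCov

/-- Lemma 6: bound on `‖U‖` where `U = R V Rᵀ`, `R = V⁻¹ - S`. -/
theorem cov_remainder_bound (m n : ℕ) (hm : 1 ≤ m) (hmn : m ≤ n) (θ : Idx m n → ℝ) :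
    matNorm (((fisher θ)⁻¹ - fisherS θ) * fisher θ * ((fisher θ)⁻¹ - fisherS θ)ᵀ) ≤
      matNorm ((fisher θ)⁻¹ - fisherS θ) +
        3 * (1 + Real.exp (2 * ‖θ‖)) ^ 4 / (4 * m * n * Real.exp (4 * ‖θ‖)) := by
  classical
  have hn : 1 ≤ n := le_trans hm hmn
  set M : ℝ := ‖θ‖ with hMdef
  have hM0 : 0 ≤ M := norm_nonneg θ
  set q : ℝ := Real.exp (2*M) / (1 + Real.exp (2*M))^2 with hqdef
  have hq0 : 0 < q := by positivity
  have hθb : ∀ k, |θ k| ≤ M := fun k => by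
    calc |θ k| = ‖θ k‖ := (Real.norm_eq_abs _).symm
    _ ≤ ‖θ‖ := norm_le_pi_norm θ k
  -- basic bounds
  have hbeta : ∀ j : Fin n, |betaF θ j| ≤ M := by
    intro j
    unfold betaF
    split
    · exact hθb _
    · simpa using hM0
  have hpf : ∀ i (j : Fin n), q ≤ pf' (alphaF θ i + betaF θ j) := by
    intro i j
    refine le_pf' (le_trans (abs_add_le _ _) ?_)
    have := hθb (Sum.inl i)
    have := hbeta j
    unfold alphaF
    linarith
  have hccl : ∀ i j, q ≤ cc θ i j := by
    intro i j
    refine le_pf' (le_trans (abs_add_le _ _) ?_)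
    have := hθb (Sum.inl i)
    have := hθb (Sum.inr j)
    unfold alphaF
    linarith
  have hccu : ∀ i j, cc θ i j ≤ 1/4 := fun i j => pf'_le_quarter _
  have hrrl : ∀ i, q ≤ rr θ i := by
    intro i
    refine le_pf' ?_
    calc |alphaF θ i| = |θ (Sum.inl i)| := rfl
    _ ≤ M := hθb _
    _ ≤ 2*M := by linarith
  have hrru : ∀ i, rr θ i ≤ 1/4 := fun i => pf'_le_quarter _
  have hnq : (0:ℝ) < (n:ℝ)*q := by
    have : (0:ℝ) < (n:ℝ) := by exact_mod_cast hn
    positivity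
  have hmq : (0:ℝ) < (m:ℝ)*q := by
    have : (0:ℝ) < (m:ℝ) := by exact_mod_cast hm
    positivity
  have hvq : ∀ i, (n:ℝ)*q ≤ vv θ i := by
    intro i
    calc (n:ℝ)*q = ∑ _j : Fin n, q := by
          rw [Finset.sum_const, Finset.card_univ, Fintype.card_fin, nsmul_eq_mul]
    _ ≤ vv θ i := Finset.sum_le_sum fun j _ => hpf i j
  have hwq : ∀ j, (m:ℝ)*q ≤ ww θ j := by
    intro j
    calc (m:ℝ)*q = ∑ _i : Fin m, q := by
          rw [Finset.sum_const, Finset.card_univ, Fintype.card_fin, nsmul_eq_mul]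
    _ ≤ ww θ j := Finset.sum_le_sum fun i _ => hccl i j
  have hcq : (m:ℝ)*q ≤ vnnFisher θ := by
    rw [vnn_eq θ hn]
    calc (m:ℝ)*q = ∑ _i : Fin m, q := by
          rw [Finset.sum_const, Finset.card_univ, Fintype.card_fin, nsmul_eq_mul]
    _ ≤ _ := Finset.sum_le_sum fun i _ => hrrl i
  have hv0 : ∀ i, vv θ i ≠ 0 := fun i => ne_of_gt (lt_of_lt_of_le hnq (hvq i))
  have hw0 : ∀ j, ww θ j ≠ 0 := fun j => ne_of_gt (lt_of_lt_of_le hmq (hwq j))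
  have hc0 : vnnFisher θ ≠ 0 := ne_of_gt (lt_of_lt_of_le hmq hcq)
  have hvinv : ∀ i, (vv θ i)⁻¹ ≤ ((n:ℝ)*q)⁻¹ := fun i => inv_anti₀ hnq (hvq i)
  have hwinv : ∀ j, (ww θ j)⁻¹ ≤ ((m:ℝ)*q)⁻¹ := fun j => inv_anti₀ hmq (hwq j)
  have hcinv : (vnnFisher θ)⁻¹ ≤ ((m:ℝ)*q)⁻¹ := inv_anti₀ hmq hcq
  have hvinv0 : ∀ i, 0 ≤ (vv θ i)⁻¹ := fun i => inv_nonneg.2 (le_of_lt (lt_of_lt_of_le hnq (hvq i)))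
  have hwinv0 : ∀ j, 0 ≤ (ww θ j)⁻¹ := fun j => inv_nonneg.2 (le_of_lt (lt_of_lt_of_le hmq (hwq j)))
  have hcinv0 : 0 ≤ (vnnFisher θ)⁻¹ := inv_nonneg.2 (le_of_lt (lt_of_lt_of_le hmq hcq))
  -- the constant
  set B : ℝ := 3 * (1 + Real.exp (2 * M)) ^ 4 / (4 * m * n * Real.exp (4 * M)) with hBdef
  set K : ℝ := (1/4) * (((m:ℝ)*q)⁻¹ * ((n:ℝ)*q)⁻¹) with hKdef
  have hK0 : 0 ≤ K := by positivity
  have hKB : 2*K ≤ B := by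
    rw [hBdef, hKdef, hqdef]
    have he : Real.exp (4*M) = Real.exp (2*M) * Real.exp (2*M) := by
      rw [← Real.exp_add]; ring_nf
    have hm' : (0:ℝ) < (m:ℝ) := by exact_mod_cast hm
    have hn' : (0:ℝ) < (n:ℝ) := by exact_mod_cast hn
    rw [he]
    rw [show (2:ℝ) * ‖θ‖ = 2 * M by rw [hMdef]]
    field_simp
    norm_num
  have hKB1 : K ≤ B := le_trans (by linarith) hKB
  have hB0 : 0 ≤ B := le_trans (by linarith) hKB1
  -- entrywise bound for S V S - S
  have hkey : ∀ k l, |(fisherS θ * fisher θ * fisherS θ - fisherS θ) k l| ≤ B := by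
    intro k l
    rw [Matrix.sub_apply]
    have hterm : ∀ i, rr θ i * ((vnnFisher θ)⁻¹ * (vv θ i)⁻¹) ≤ K := by
      intro i
      rw [hKdef]
      exact mul3_le (le_of_lt (lt_of_lt_of_le hq0 (hrrl i))) hcinv0 (hvinv0 i)
        (hrru i) hcinv (hvinv i)
    have hterm0 : ∀ i, 0 ≤ rr θ i * ((vnnFisher θ)⁻¹ * (vv θ i)⁻¹) := fun i =>
      mul_nonneg (le_of_lt (lt_of_lt_of_le hq0 (hrrl i))) (mul_nonneg hcinv0 (hvinv0 i))
    have hterm2 : ∀ i j, cc θ i j * ((vv θ i)⁻¹ * (ww θ j)⁻¹) ≤ K := by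
      intro i j
      calc cc θ i j * ((vv θ i)⁻¹ * (ww θ j)⁻¹)
          ≤ (1/4) * (((n:ℝ)*q)⁻¹ * ((m:ℝ)*q)⁻¹) :=
            mul3_le (le_of_lt (lt_of_lt_of_le hq0 (hccl i j))) (hvinv0 i) (hwinv0 j)
              (hccu i j) (hvinv i) (hwinv j)
      _ = K := by rw [hKdef]; ring
    have hterm20 : ∀ i j, 0 ≤ cc θ i j * ((vv θ i)⁻¹ * (ww θ j)⁻¹) := fun i j =>
      mul_nonneg (le_of_lt (lt_of_lt_of_le hq0 (hccl i j))) (mul_nonneg (hvinv0 i) (hwinv0 j))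
    cases k with
    | inl i =>
      cases l with
      | inl i' =>
        rw [TS_ll θ hn hc0 i i' (hv0 i) (hv0 i')]
        have := hterm i
        have := hterm i'
        have := hterm0 i
        have := hterm0 i'
        rw [show fisherS θ (Sum.inl i) (Sum.inl i')
            + rr θ i * ((vnnFisher θ)⁻¹ * (vv θ i)⁻¹)
            + rr θ i' * ((vnnFisher θ)⁻¹ * (vv θ i')⁻¹)
            - fisherS θ (Sum.inl i) (Sum.inl i')
          = rr θ i * ((vnnFisher θ)⁻¹ * (vv θ i)⁻¹)
            + rr θ i' * ((vnnFisher θ)⁻¹ * (vv θ i')⁻¹) by ring]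
        rw [abs_of_nonneg (by linarith)]
        linarith
      | inr j =>
        rw [TS_lr θ hn hc0 i j (hv0 i) (hw0 j)]
        have := hterm i
        have := hterm0 i
        have := hterm2 i j
        have := hterm20 i j
        rw [show fisherS θ (Sum.inl i) (Sum.inr j)
            + cc θ i j * ((vv θ i)⁻¹ * (ww θ j)⁻¹)
            - rr θ i * ((vnnFisher θ)⁻¹ * (vv θ i)⁻¹)
            - fisherS θ (Sum.inl i) (Sum.inr j)
          = cc θ i j * ((vv θ i)⁻¹ * (ww θ j)⁻¹)
            - rr θ i * ((vnnFisher θ)⁻¹ * (vv θ i)⁻¹) by ring]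
        rw [abs_le]
        constructor <;> linarith
    | inr j =>
      cases l with
      | inl i' =>
        rw [TS_rl θ hn i' j (hv0 i') (hw0 j)]
        have := hterm i'
        have := hterm0 i'
        have := hterm2 i' j
        have := hterm20 i' j
        rw [show fisherS θ (Sum.inr j) (Sum.inl i')
            + cc θ i' j * ((vv θ i')⁻¹ * (ww θ j)⁻¹)
            - rr θ i' * ((vnnFisher θ)⁻¹ * (vv θ i')⁻¹)
            - fisherS θ (Sum.inr j) (Sum.inl i')
          = cc θ i' j * ((vv θ i')⁻¹ * (ww θ j)⁻¹)
            - rr θ i' * ((vnnFisher θ)⁻¹ * (vv θ i')⁻¹) by ring]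
        rw [abs_le]
        constructor <;> linarith
      | inr j' =>
        rw [TS_rr θ hn j j' (hw0 j), sub_self, abs_zero]
        exact hB0
  -- matrix identity
  set V := fisher θ with hV
  set S := fisherS θ with hS
  set R : Matrix (Idx m n) (Idx m n) ℝ := V⁻¹ - S with hR
  have hVs : Vᵀ = V := by rw [hV]; exact fisher_symm θ
  have hSs : Sᵀ = S := by rw [hS]; exact fisherS_symm θ
  have hRT : Rᵀ = R := by
    rw [hR, Matrix.transpose_sub, Matrix.transpose_nonsing_inv, hVs, hSs]
  have habs : ∀ k l, |(R * V * Rᵀ) k l| ≤ |R k l| + |(S * V * S - S) k l| := by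
    by_cases hdet : IsUnit V.det
    · have hVV : V⁻¹ * V = 1 := Matrix.nonsing_inv_mul V hdet
      have hVV' : V * V⁻¹ = 1 := Matrix.mul_nonsing_inv V hdet
      have h2 : S * V * V⁻¹ = S := by rw [Matrix.mul_assoc, hVV', Matrix.mul_one]
      have h1 : R * V * Rᵀ = R + (S * V * S - S) := by
        rw [hRT, hR]
        calc (V⁻¹ - S) * V * (V⁻¹ - S) = (1 - S * V) * (V⁻¹ - S) := by
              rw [Matrix.sub_mul, hVV]
        _ = V⁻¹ - S - (S * V * V⁻¹ - S * V * S) := by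
              rw [Matrix.sub_mul, Matrix.one_mul, Matrix.mul_sub, Matrix.mul_assoc,
                Matrix.mul_assoc]
        _ = (V⁻¹ - S) + (S * V * S - S) := by rw [h2]; abel
      intro k l
      rw [h1]
      rw [Matrix.add_apply]
      exact abs_add_le _ _
    · have hV0 : V⁻¹ = 0 := Matrix.nonsing_inv_apply_not_isUnit V hdet
      have h1 : R * V * Rᵀ = -R + (S * V * S - S) := by
        rw [hRT, hR, hV0, zero_sub, Matrix.neg_mul, Matrix.neg_mul, Matrix.mul_neg, neg_neg]
        abel
      intro k l
      rw [h1, Matrix.add_apply, Matrix.neg_apply]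
      calc |(-R k l) + (S*V*S - S) k l| ≤ |(-R k l)| + |(S*V*S - S) k l| := abs_add_le _ _
      _ = |R k l| + |(S*V*S - S) k l| := by rw [abs_neg]
  -- conclude
  have hnn : 0 ≤ matNorm R + B := add_nonneg (norm_nonneg _) hB0
  show ‖fun p : Idx m n × Idx m n => (R * V * Rᵀ) p.1 p.2‖ ≤ matNorm R + B
  refine (pi_norm_le_iff_of_nonneg hnn).2 ?_
  intro p
  rw [Real.norm_eq_abs]
  calc |(R * V * Rᵀ) p.1 p.2| ≤ |R p.1 p.2| + |(S * V * S - S) p.1 p.2| := habs p.1 p.2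
  _ ≤ matNorm R + B := by
      have h3 : |R p.1 p.2| ≤ matNorm R := by
        have := norm_le_pi_norm (fun p : Idx m n × Idx m n => R p.1 p.2) p
        simpa [matNorm, Real.norm_eq_abs] using this
      have h4 := hkey p.1 p.2
      linarith


end Affiliation
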